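/- Let Δ > 0. Then for all real i ≤ −1 and all real r with 0 ≤ r < Δ, the first-order Taylor remainder of Φ⁻ satisfies 0 ≤ −E⁻(i, r) ≤ −E⁻(−1, Δ); in particular |Φ⁻(i − r) − (Φ⁻(i) − r·(Φ⁻)'(i))| ≤ −(Φ⁻(−1 − Δ) − Φ⁻(−1) + Δ·(Φ⁻)'(−1)). -/

import Mathlib

open Real Set

lemma two_rpow_pos (x : ℝ) : 0 < (2:ℝ) ^ x := Real.rpow_pos_of_pos two_pos x

lemma two_rpow_lt_one {x : ℝ} (hx : x < 0) : (2:ℝ) ^ x < 1 :=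
  Real.rpow_lt_one_of_one_lt_of_neg one_lt_two hx

lemma hd_rpow (x : ℝ) : HasDerivAt (fun t => (2:ℝ) ^ t) ((2:ℝ) ^ x * Real.log 2) x :=
  (Real.hasStrictDerivAt_const_rpow two_pos x).hasDerivAt

/-- Φ⁻(x) = log₂(1 − 2^x) -/
noncomputable def Phim (x : ℝ) : ℝ := Real.logb 2 (1 - (2:ℝ) ^ x)

/-- (Φ⁻)'(x) = −2^x / (1 − 2^x) -/
noncomputable def dPhim (x : ℝ) : ℝ := -(2:ℝ) ^ x / (1 - (2:ℝ) ^ x)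

noncomputable def ddPhim (x : ℝ) : ℝ := -((2:ℝ) ^ x * Real.log 2) / (1 - (2:ℝ) ^ x) ^ 2

lemma hd_Phim {x : ℝ} (hx : x < 0) : HasDerivAt Phim (dPhim x) x := by
  have h1 : (0:ℝ) < 1 - (2:ℝ) ^ x := by linarith [two_rpow_lt_one hx]
  have hinner : HasDerivAt (fun t => 1 - (2:ℝ) ^ t) (-((2:ℝ) ^ x * Real.log 2)) x := by
    simpa [Pi.sub_def] using (hasDerivAt_const x (1:ℝ)).sub (hd_rpow x)
  have hlog : HasDerivAt (fun t => Real.log (1 - (2:ℝ) ^ t))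
      (-((2:ℝ) ^ x * Real.log 2) / (1 - (2:ℝ) ^ x)) x := by
    simpa [div_eq_inv_mul, Function.comp_def] using (Real.hasDerivAt_log h1.ne').comp x hinner
  have := hlog.div_const (Real.log 2)
  have heq : Phim = fun t => Real.log (1 - (2:ℝ) ^ t) / Real.log 2 := by
    funext t; simp [Phim, Real.logb, div_eq_inv_mul, mul_comm]
  rw [heq]
  refine this.congr_deriv ?_
  have h2 : Real.log 2 ≠ 0 := Real.log_ne_zero_of_pos_of_ne_one two_pos (by norm_num)
  unfold dPhim
  field_simp [h1.ne']

lemma hd_dPhim {x : ℝ} (hx : x < 0) : HasDerivAt dPhim (ddPhim x) x := by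
  have h1 : (0:ℝ) < 1 - (2:ℝ) ^ x := by linarith [two_rpow_lt_one hx]
  have hnum : HasDerivAt (fun t => -(2:ℝ) ^ t) (-((2:ℝ) ^ x * Real.log 2)) x := (hd_rpow x).neg
  have hden : HasDerivAt (fun t => 1 - (2:ℝ) ^ t) (-((2:ℝ) ^ x * Real.log 2)) x := by
    simpa [Pi.sub_def] using (hasDerivAt_const x (1:ℝ)).sub (hd_rpow x)
  have := hnum.div hden h1.ne'
  have heq : dPhim = fun t => -(2:ℝ) ^ t / (1 - (2:ℝ) ^ t) := rfl
  rw [heq]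
  refine this.congr_deriv ?_
  unfold ddPhim
  field_simp
  ring

lemma dPhim_anti {x y : ℝ} (hxy : x ≤ y) (hy : y < 0) : dPhim y ≤ dPhim x := by
  have hx : x < 0 := lt_of_le_of_lt hxy hy
  have ax := two_rpow_pos x
  have ay := two_rpow_pos y
  have bx := two_rpow_lt_one hx
  have by' := two_rpow_lt_one hy
  have hab : (2:ℝ) ^ x ≤ (2:ℝ) ^ y := Real.rpow_le_rpow_left_iff one_lt_two |>.2 hxy
  unfold dPhim
  rw [div_le_div_iff₀ (by linarith) (by linarith)]
  nlinarith

lemma ddPhim_anti {x y : ℝ} (hxy : x ≤ y) (hy : y < 0) : ddPhim y ≤ ddPhim x := by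
  have hx : x < 0 := lt_of_le_of_lt hxy hy
  have ax := two_rpow_pos x
  have ay := two_rpow_pos y
  have bx := two_rpow_lt_one hx
  have by' := two_rpow_lt_one hy
  have hab : (2:ℝ) ^ x ≤ (2:ℝ) ^ y := Real.rpow_le_rpow_left_iff one_lt_two |>.2 hxy
  have hl2 : 0 < Real.log 2 := Real.log_pos one_lt_two
  unfold ddPhim
  rw [div_le_div_iff₀ (pow_pos (by linarith) 2) (pow_pos (by linarith) 2)]
  have key : (0:ℝ) ≤ ((2:ℝ)^y - 2^x) * (1 - 2^x * 2^y) :=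
    mul_nonneg (by linarith) (by nlinarith)
  nlinarith [mul_nonneg key hl2.le]

/-- generic: f with antitone derivative on negatives, the remainder is monotone in t. -/
lemma rem_mono (f f' : ℝ → ℝ)
    (hf : ∀ x < (0:ℝ), HasDerivAt f (f' x) x)
    (hmono : ∀ x y : ℝ, x ≤ y → y < 0 → f' y ≤ f' x)
    (i : ℝ) (hi : i < 0) :
    MonotoneOn (fun t => f i - f (i - t) - t * f' i) (Set.Ici 0) := by
  have hder : ∀ t ∈ Set.Ici (0:ℝ), HasDerivAt (fun t => f i - f (i - t) - t * f' i)
      (f' (i - t) - f' i) t := by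
    intro t ht
    have hlt : i - t < 0 := by simp only [Set.mem_Ici] at ht; linarith
    have h1 : HasDerivAt (fun t : ℝ => i - t) (-1) t := by
      simpa [Pi.sub_def] using (hasDerivAt_const t i).sub (hasDerivAt_id t)
    have h2 : HasDerivAt (fun t => f (i - t)) (f' (i - t) * (-1)) t :=
      (hf _ hlt).comp t h1
    have h3 := ((hasDerivAt_const t (f i)).sub h2).sub ((hasDerivAt_id t).mul_const (f' i))
    refine h3.congr_deriv ?_; ring
  apply monotoneOn_of_deriv_nonneg (convex_Ici 0)
  · exact fun t ht => ((hder t ht).differentiableAt).continuousAt.continuousWithinAt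
  · intro t ht
    rw [interior_Ici] at ht
    exact ((hder t (Set.mem_Ici.2 (le_of_lt ht))).differentiableAt).differentiableWithinAt
  · intro t ht
    rw [interior_Ici] at ht
    rw [(hder t (Set.mem_Ici.2 (le_of_lt ht))).deriv]
    have : i - t ≤ i := by linarith [le_of_lt (Set.mem_Ioi.1 ht)]
    linarith [hmono (i - t) i this hi]

lemma rem_nonneg (f f' : ℝ → ℝ)
    (hf : ∀ x < (0:ℝ), HasDerivAt f (f' x) x)
    (hmono : ∀ x y : ℝ, x ≤ y → y < 0 → f' y ≤ f' x)
    (i : ℝ) (hi : i < 0) {r : ℝ} (hr : 0 ≤ r) :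
    0 ≤ f i - f (i - r) - r * f' i := by
  have := rem_mono f f' hf hmono i hi (Set.self_mem_Ici) hr hr
  simpa using this


/-- First-order Taylor remainder E⁻(i, r) = Φ⁻(i − r) − Φ⁻(i) + r·(Φ⁻)'(i) -/
noncomputable def Em (i r : ℝ) : ℝ := Phim (i - r) - Phim i + r * dPhim i

lemma G_mono (Δ : ℝ) (hΔ : 0 < Δ) :
    MonotoneOn (fun i => Phim i - Phim (i - Δ) - Δ * dPhim i) (Set.Iio 0) := by
  have hder : ∀ i ∈ Set.Iio (0:ℝ), HasDerivAt (fun i => Phim i - Phim (i - Δ) - Δ * dPhim i)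
      (dPhim i - dPhim (i - Δ) - Δ * ddPhim i) i := by
    intro i hi
    simp only [Set.mem_Iio] at hi
    have hlt : i - Δ < 0 := by linarith
    have h1 : HasDerivAt (fun i : ℝ => i - Δ) 1 i := by
      simpa [Pi.sub_def] using (hasDerivAt_id i).sub (hasDerivAt_const i Δ)
    have h2 : HasDerivAt (fun i => Phim (i - Δ)) (dPhim (i - Δ) * 1) i :=
      by have := (hd_Phim hlt).comp i h1; exact this
    have h3 := ((hd_Phim hi).sub h2).sub ((hd_dPhim hi).const_mul Δ)
    refine h3.congr_deriv ?_; ring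
  apply monotoneOn_of_deriv_nonneg (convex_Iio (0:ℝ))
  · exact fun i hi => ((hder i hi).differentiableAt).continuousAt.continuousWithinAt
  · intro i hi
    rw [interior_Iio] at hi
    exact ((hder i hi).differentiableAt).differentiableWithinAt
  · intro i hi
    rw [interior_Iio] at hi
    rw [(hder i hi).deriv]
    exact rem_nonneg dPhim ddPhim (fun x hx => hd_dPhim hx) (fun x y h hy => ddPhim_anti h hy)
      i hi hΔ.le

theorem stmt_2 (Δ : ℝ) (hΔ : 0 < Δ) :
    ∀ i : ℝ, i ≤ -1 → ∀ r : ℝ, 0 ≤ r → r < Δ →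
      0 ≤ -Em i r ∧ -Em i r ≤ -Em (-1) Δ ∧
      |Phim (i - r) - (Phim i - r * dPhim i)| ≤
        -(Phim (-1 - Δ) - Phim (-1) + Δ * dPhim (-1)) := by
  intro i hi r hr0 hrΔ
  have hi0 : i < 0 := by linarith
  have hPd := fun (x : ℝ) (hx : x < 0) => hd_Phim hx
  have hPa := fun (x y : ℝ) (h : x ≤ y) (hy : y < 0) => dPhim_anti h hy
  have h1 : 0 ≤ -Em i r := by
    have := rem_nonneg Phim dPhim hPd hPa i hi0 hr0
    unfold Em; linarith
  have hm := rem_mono Phim dPhim hPd hPa i hi0 (Set.mem_Ici.2 hr0) (Set.mem_Ici.2 hΔ.le) hrΔ.le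
  have hg := G_mono Δ hΔ (Set.mem_Iio.2 hi0) (Set.mem_Iio.2 (by norm_num : (-1:ℝ) < 0)) hi
  simp only at hm hg
  have h2 : -Em i r ≤ -Em (-1) Δ := by unfold Em at *; linarith
  refine ⟨h1, h2, ?_⟩
  have heq : Phim (i - r) - (Phim i - r * dPhim i) = Em i r := by unfold Em; ring
  rw [heq, abs_of_nonpos (by linarith)]
  have : Phim (-1 - Δ) - Phim (-1) + Δ * dPhim (-1) = Em (-1) Δ := rfl
  rw [this]
  exact h2
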